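/- With the notation of the previous statement (A = U + 2U*, M = diag(α_n), N = diag(β_n), α_n = (1+4^{−n})^{−1/2}, β_n = 2^{−n}(1+4^{−n})^{−1/2}), the operator M A N − N A* M is skew-adjoint and injective with dense range; i.e., it is a quasiaffinity. -/

import Mathlib

open ContinuousLinearMap

local notation "⟪" x ", " y "⟫" => @inner ℂ _ _ x y

noncomputable section QAux

def qs (n : ℤ) : ℝ := Real.sqrt (1 + (4:ℝ) ^ (-n))
def qα (n : ℤ) : ℝ := 1 / qs n
def qβ (n : ℤ) : ℝ := (2:ℝ) ^ (-n) / qs n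
def qc (n : ℤ) : ℝ := 3 * (2:ℝ) ^ (-n) / (qs (n-1) * qs n)

lemma qs_pos (n : ℤ) : 0 < qs n := Real.sqrt_pos.2 (by positivity)

lemma qs_ne (n : ℤ) : qs n ≠ 0 := (qs_pos n).ne'

lemma qs_one_le (n : ℤ) : 1 ≤ qs n := by
  have h : (1:ℝ) ≤ 1 + 4 ^ (-n) :=
    le_add_of_nonneg_right (zpow_pos (by norm_num : (0:ℝ) < 4) (-n)).le
  calc (1:ℝ) = Real.sqrt 1 := Real.sqrt_one.symm
    _ ≤ qs n := Real.sqrt_le_sqrt h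

lemma qα_pos (n : ℤ) : 0 < qα n := by
  rw [qα]; exact one_div_pos.2 (qs_pos n)

lemma qα_le_one (n : ℤ) : qα n ≤ 1 := by
  rw [qα, div_le_one (qs_pos n)]; exact qs_one_le n

lemma qc_pos (n : ℤ) : 0 < qc n := by
  unfold qc
  have := qs_pos (n-1); have := qs_pos n
  positivity

lemma two_zpow_succ (m : ℤ) : (2:ℝ) ^ (-m) = 2 ^ (-(m+1)) * 2 := by
  rw [← zpow_add_one₀ (two_ne_zero)]
  norm_num

lemma qc_coef1 (n : ℤ) :
    qβ n * qα (n-1) - 2 * (qα n * qβ (n-1)) = -(qc n) := by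
  have h2 : (2:ℝ) ^ (-(n-1)) = 2 ^ (-n) * 2 := by
    rw [show -(n-1) = -n + 1 by ring, zpow_add₀ (two_ne_zero)]; norm_num
  unfold qβ qα qc
  rw [h2]
  field_simp
  ring

lemma qc_coef2 (n : ℤ) :
    2 * (qβ n * qα (n+1)) - qα n * qβ (n+1) = qc (n+1) := by
  have h2 : (2:ℝ) ^ (-n) = 2 ^ (-(n+1)) * 2 := two_zpow_succ n
  unfold qβ qα qc
  rw [show (n+1-1 : ℤ) = n by ring, h2]
  field_simp
  ring

lemma qc_step (m : ℤ) (X Y : ℝ) (h : qc (m+1) * X = qc m * Y) :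
    qα (m+1) * X = 2 * (qα (m-1) * Y) := by
  set k : ℝ := 3 * (2:ℝ) ^ (-(m+1)) / qs m with hk
  have hkpos : 0 < k := by rw [hk]; have := qs_pos m; positivity
  have h1 : qc (m+1) = k * qα (m+1) := by
    rw [hk, qc, qα, show (m+1-1 : ℤ) = m by ring]; field_simp
  have h2 : qc m = k * (2 * qα (m-1)) := by
    rw [hk, qc, qα, two_zpow_succ m]
    have := qs_ne m; have := qs_ne (m-1)
    field_simp
  rw [h1, h2, mul_assoc, mul_assoc] at h
  have := mul_left_cancel₀ hkpos.ne' h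
  rw [this]; ring

section Hilbert

variable {H : Type*} [NormedAddCommGroup H] [InnerProductSpace ℂ H] [CompleteSpace H]
  (e : HilbertBasis ℤ ℂ H)

lemma aux_vext {x y : H} (h : ∀ i : ℤ, ⟪e i, x⟫ = ⟪e i, y⟫) : x = y := by
  apply e.repr.injective
  apply lp.ext
  funext i
  rw [e.repr_apply_apply, e.repr_apply_apply]
  exact h i

lemma aux_opext {f g : H →L[ℂ] H} (h : ∀ n : ℤ, f (e n) = g (e n)) : f = g :=
  ContinuousLinearMap.ext_on (Submodule.dense_iff_topologicalClosure_eq_top.mpr e.dense_span)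
    (by rintro x ⟨n, rfl⟩; exact h n)

lemma aux_inner (i j : ℤ) : ⟪e i, e j⟫ = if i = j then 1 else 0 :=
  orthonormal_iff_ite.mp e.orthonormal i j

lemma aux_diag_sa (d : ℤ → ℝ) {D : H →L[ℂ] H} (hD : ∀ n, D (e n) = ((d n : ℝ) : ℂ) • e n) :
    adjoint D = D := by
  apply aux_opext e
  intro n
  apply aux_vext e
  intro m
  rw [adjoint_inner_right, hD, hD, inner_smul_left, inner_smul_right, Complex.conj_ofReal,
    aux_inner]
  by_cases h : m = n
  · subst h; simp
  · simp [h]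

lemma aux_adjU {U : H →L[ℂ] H} (hU : ∀ n : ℤ, U (e n) = e (n - 1)) (n : ℤ) :
    adjoint U (e n) = e (n + 1) := by
  apply aux_vext e
  intro m
  rw [adjoint_inner_right, hU, aux_inner, aux_inner]
  exact if_congr (by omega) rfl rfl

end Hilbert

end QAux

/- With A = U + 2U*, M = diag(αₙ), N = diag(βₙ) as before, the operator
M A N - N A* M is skew-adjoint and is a quasiaffinity (injective with dense
range). -/
theorem MAN_sub_NAstarM_quasiaffinity (H : Type*) [NormedAddCommGroup H]
    [InnerProductSpace ℂ H] [CompleteSpace H]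
    (e : HilbertBasis ℤ ℂ H) (U M N : H →L[ℂ] H)
    (hU : ∀ n : ℤ, U (e n) = e (n - 1))
    (hM : ∀ n : ℤ, M (e n) = ((1 / Real.sqrt (1 + (4 : ℝ) ^ (-n)) : ℝ) : ℂ) • e n)
    (hN : ∀ n : ℤ, N (e n) =
      (((2 : ℝ) ^ (-n) / Real.sqrt (1 + (4 : ℝ) ^ (-n)) : ℝ) : ℂ) • e n) :
    adjoint (M * (U + 2 • adjoint U) * N - N * adjoint (U + 2 • adjoint U) * M) =
        -(M * (U + 2 • adjoint U) * N - N * adjoint (U + 2 • adjoint U) * M) ∧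
      Function.Injective
        ⇑((M * (U + 2 • adjoint U) * N - N * adjoint (U + 2 • adjoint U) * M : H →L[ℂ] H)) ∧
      DenseRange
        ⇑((M * (U + 2 • adjoint U) * N - N * adjoint (U + 2 • adjoint U) * M : H →L[ℂ] H)) := by
  set A : H →L[ℂ] H := U + 2 • adjoint U with hA
  set T : H →L[ℂ] H := M * A * N - N * adjoint A * M with hTdef
  have hM' : ∀ n : ℤ, M (e n) = ((qα n : ℝ) : ℂ) • e n := fun n => hM n
  have hN' : ∀ n : ℤ, N (e n) = ((qβ n : ℝ) : ℂ) • e n := fun n => hN n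
  have hMsa : adjoint M = M := aux_diag_sa e qα hM'
  have hNsa : adjoint N = N := aux_diag_sa e qβ hN'
  have hU' : ∀ n : ℤ, adjoint U (e n) = e (n + 1) := aux_adjU e hU
  -- skew-adjointness
  have hskew : adjoint T = -T := by
    rw [hTdef, ← star_eq_adjoint]
    rw [← star_eq_adjoint] at hMsa hNsa
    simp only [star_sub, star_mul, star_star, ← star_eq_adjoint, hMsa, hNsa]
    rw [mul_assoc, mul_assoc]
    abel
  -- action on the basis
  have hTn : ∀ n : ℤ, T (e n) =
      ((qβ n * qα (n-1) - 2 * (qα n * qβ (n-1)) : ℝ) : ℂ) • e (n-1)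
        + ((2 * (qβ n * qα (n+1)) - qα n * qβ (n+1) : ℝ) : ℂ) • e (n+1) := by
    intro n
    have hadjA_op : adjoint A = adjoint U + 2 • U := by
      have h1 : star A = star U + 2 • U := by
        rw [hA, star_add, star_nsmul, ← star_eq_adjoint, star_star]
      rw [← star_eq_adjoint, h1, star_eq_adjoint]
    have hadjA : ∀ n : ℤ, adjoint A (e n) = e (n+1) + (2:ℕ) • e (n-1) := by
      intro n
      rw [hadjA_op]
      simp [hU, hU']
    have hAn : ∀ n : ℤ, A (e n) = e (n-1) + (2:ℕ) • e (n+1) := by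
      intro n; rw [hA]; simp [hU, hU']
    rw [hTdef]
    simp only [ContinuousLinearMap.sub_apply, ContinuousLinearMap.mul_apply, hN', hM',
      map_smul, hadjA, hAn, map_add, map_nsmul, hU, hU']
    simp only [hM', hN', ← Nat.cast_smul_eq_nsmul ℂ, Nat.cast_ofNat]
    push_cast
    module
  have hT : ∀ n : ℤ, T (e n) =
      ((qc (n+1) : ℝ) : ℂ) • e (n+1) - ((qc n : ℝ) : ℂ) • e (n-1) := by
    intro n
    rw [hTn n, qc_coef1 n, qc_coef2 n]
    push_cast
    module
  -- the key vanishing lemma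
  have key0 : ∀ x : H, (∀ m : ℤ, ⟪T (e m), x⟫ = 0) → x = 0 := by
    intro x hx
    by_contra hne
    obtain ⟨n0, hn0⟩ : ∃ n : ℤ, ⟪e n, x⟫ ≠ 0 := by
      by_contra h
      push_neg at h
      exact hne (aux_vext e (fun i => by simp [h i]))
    set a : ℤ → ℂ := fun m => ⟪e m, x⟫ with ha
    have hrec : ∀ m : ℤ, (qc (m+1) : ℂ) * a (m+1) = (qc m : ℂ) * a (m-1) := by
      intro m
      have := hx m
      rw [hT m, inner_sub_left, inner_smul_left, inner_smul_left, Complex.conj_ofReal,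
        Complex.conj_ofReal, sub_eq_zero] at this
      exact this
    have hstep : ∀ m : ℤ, qα (m+1) * ‖a (m+1)‖ = 2 * (qα (m-1) * ‖a (m-1)‖) := by
      intro m
      apply qc_step m
      have := congrArg norm (hrec m)
      rwa [norm_mul, norm_mul, Complex.norm_real, Complex.norm_real,
        Real.norm_of_nonneg (qc_pos (m+1)).le, Real.norm_of_nonneg (qc_pos m).le] at this
    have hgrow : ∀ k : ℕ, qα (n0 + 2*k) * ‖a (n0 + 2*k)‖ = 2^k * (qα n0 * ‖a n0‖) := by
      intro k
      induction k with
      | zero => simp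
      | succ k ih =>
        have h := hstep (n0 + 2*k + 1)
        have e1 : (n0 + 2*(k:ℤ) + 1 + 1) = n0 + 2*((k+1 : ℕ) : ℤ) := by push_cast; ring
        have e2 : (n0 + 2*(k:ℤ) + 1 - 1) = n0 + 2*(k:ℤ) := by ring
        rw [e1, e2] at h
        rw [h, ih]
        ring
    have hbound : ∀ m : ℤ, ‖a m‖ ≤ ‖x‖ := by
      intro m
      have := norm_inner_le_norm (𝕜 := ℂ) (e m) x
      rwa [e.orthonormal.1 m, one_mul] at this
    have hc0 : 0 < qα n0 * ‖a n0‖ :=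
      mul_pos (qα_pos n0) (norm_pos_iff.2 hn0)
    obtain ⟨k, hk⟩ := pow_unbounded_of_one_lt (R := ℝ) (‖x‖ / (qα n0 * ‖a n0‖)) one_lt_two
    have hle : (2:ℝ)^k * (qα n0 * ‖a n0‖) ≤ ‖x‖ := by
      rw [← hgrow k]
      calc qα (n0 + 2*k) * ‖a (n0 + 2*k)‖
          ≤ 1 * ‖a (n0 + 2*k)‖ :=
            mul_le_mul_of_nonneg_right (qα_le_one _) (norm_nonneg _)
        _ = ‖a (n0 + 2*k)‖ := one_mul _
        _ ≤ ‖x‖ := hbound _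
    rw [div_lt_iff₀ hc0] at hk
    linarith
  -- injectivity
  have hker : ∀ x : H, T x = 0 → x = 0 := by
    intro x hx
    apply key0
    intro m
    rw [← adjoint_inner_right, hskew]
    simp [hx]
  have hinj : Function.Injective ⇑T := by
    intro x y hxy
    have : T (x - y) = 0 := by rw [map_sub, hxy, sub_self]
    exact sub_eq_zero.mp (hker _ this)
  refine ⟨hskew, hinj, ?_⟩
  -- dense range
  have hdense : Dense ((LinearMap.range (T : H →ₗ[ℂ] H) : Submodule ℂ H) : Set H) := by
    rw [Submodule.dense_iff_topologicalClosure_eq_top,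
      Submodule.topologicalClosure_eq_top_iff]
    rw [Submodule.eq_bot_iff]
    intro y hy
    apply key0
    intro m
    exact (Submodule.mem_orthogonal _ y).mp hy (T (e m)) ⟨e m, rfl⟩
  simpa [LinearMap.coe_range, DenseRange] using hdense
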